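/- For μ > 0, set λ(μ) = (√(μ⁴+μ) − μ²)/(2μ). Then λ(μ) > 0, and the improper integral ∫₀^∞ dμ / (√(agm(√λ(μ), √(λ(μ)+μ))) · √(μ⁴+μ)) converges. -/

import Mathlib

open Filter Set MeasureTheory

open Topology

/-- The AGM iteration: `agmSeq a b n` is the pair `(aₙ, bₙ)`. -/
noncomputable def agmSeq (a b : ℝ) : ℕ → ℝ × ℝ
  | 0 => (a, b)
  | n + 1 => (((agmSeq a b n).1 + (agmSeq a b n).2) / 2,
      Real.sqrt ((agmSeq a b n).1 * (agmSeq a b n).2))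

/-- The arithmetic–geometric mean of `a` and `b`. -/
noncomputable def agm (a b : ℝ) : ℝ := limUnder atTop (fun n => (agmSeq a b n).1)

noncomputable def lam (μ : ℝ) : ℝ := (Real.sqrt (μ ^ 4 + μ) - μ ^ 2) / (2 * μ)

lemma lam_pos' {μ : ℝ} (hμ : 0 < μ) : 0 < lam μ := by
  have h : μ ^ 2 < Real.sqrt (μ ^ 4 + μ) := by
    rw [show μ ^ 4 + μ = (μ^2)^2 + μ by ring]
    nlinarith [Real.sq_sqrt (show (0:ℝ) ≤ (μ^2)^2 + μ by positivity),
      Real.sqrt_nonneg ((μ^2)^2 + μ), sq_nonneg (Real.sqrt ((μ^2)^2 + μ) - μ^2)]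
  exact div_pos (by linarith) (by linarith)

lemma lam_mul {μ : ℝ} (hμ : 0 < μ) : lam μ * (lam μ + μ) = 1 / (4 * μ) := by
  have h : Real.sqrt (μ ^ 4 + μ) ^ 2 = μ ^ 4 + μ :=
    Real.sq_sqrt (by positivity)
  unfold lam
  field_simp
  nlinarith [h, Real.sq_sqrt (show (0:ℝ) ≤ μ * (μ ^ 3 + 1) by positivity)]

/-- AM–GM. -/
lemma sqrt_mul_le_add {x y : ℝ} (hx : 0 ≤ x) (hy : 0 ≤ y) :
    Real.sqrt (x * y) ≤ (x + y) / 2 := by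
  rw [Real.sqrt_mul hx]
  nlinarith [Real.sq_sqrt hx, Real.sq_sqrt hy, sq_nonneg (Real.sqrt x - Real.sqrt y),
    Real.sqrt_nonneg x, Real.sqrt_nonneg y]

lemma agm_lower (a b : ℝ) (ha : 0 < a) (hb : 0 < b) :
    Real.sqrt (a * b) ≤ agm a b ∧
    Tendsto (fun n => (agmSeq a b n).1) atTop (𝓝 (agm a b)) := by
  set A : ℕ → ℝ := fun n => (agmSeq a b n).1 with hA
  set B : ℕ → ℝ := fun n => (agmSeq a b n).2 with hB
  have hAs : ∀ n, A (n + 1) = (A n + B n) / 2 := fun n => rfl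
  have hBs : ∀ n, B (n + 1) = Real.sqrt (A n * B n) := fun n => rfl
  have pos : ∀ n, 0 < A n ∧ 0 < B n := by
    intro n
    induction n with
    | zero => exact ⟨ha, hb⟩
    | succ n ih =>
      refine ⟨?_, ?_⟩
      · rw [hAs]; linarith [ih.1, ih.2]
      · rw [hBs]; exact Real.sqrt_pos.mpr (mul_pos ih.1 ih.2)
  have hle : ∀ n, B (n + 1) ≤ A (n + 1) := by
    intro n
    rw [hAs, hBs]
    exact sqrt_mul_le_add (pos n).1.le (pos n).2.le
  have hBmono : ∀ n, B (n + 1) ≤ B (n + 2) := by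
    intro n
    rw [hBs (n + 1)]
    calc B (n + 1) = Real.sqrt (B (n + 1) * B (n + 1)) := by
          rw [Real.sqrt_mul_self (pos (n + 1)).2.le]
      _ ≤ Real.sqrt (A (n + 1) * B (n + 1)) :=
          Real.sqrt_le_sqrt (mul_le_mul_of_nonneg_right (hle n) (pos (n + 1)).2.le)
  have hBlow : ∀ n, B 1 ≤ B (n + 1) := by
    intro n
    induction n with
    | zero => exact le_refl _
    | succ n ih => exact ih.trans (hBmono n)
  have hAlow : ∀ n, B 1 ≤ A (n + 1) := fun n => (hBlow n).trans (hle n)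
  have hanti : Antitone (fun n => A (n + 1)) := by
    apply antitone_nat_of_succ_le
    intro n
    rw [hAs (n + 1)]
    linarith [hle n]
  have hbdd : BddBelow (range fun n => A (n + 1)) := by
    refine ⟨B 1, ?_⟩
    rintro x ⟨n, rfl⟩
    exact hAlow n
  have key : Tendsto (fun n => A (n + 1)) atTop (𝓝 (⨅ n, A (n + 1))) :=
    tendsto_atTop_ciInf hanti hbdd
  have hL : B 1 ≤ ⨅ n, A (n + 1) := le_ciInf hAlow
  have hT : Tendsto A atTop (𝓝 (⨅ n, A (n + 1))) :=
    (tendsto_add_atTop_iff_nat 1).mp key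
  have hagm : agm a b = ⨅ n, A (n + 1) := hT.limUnder_eq
  have hB1 : B 1 = Real.sqrt (a * b) := by simp [hB, agmSeq]
  rw [hagm]
  exact ⟨hB1 ▸ hL, hT⟩

lemma measurable_agmSeq (n : ℕ) {f g : ℝ → ℝ} (hf : Measurable f) (hg : Measurable g) :
    Measurable (fun x => (agmSeq (f x) (g x) n).1) ∧
      Measurable (fun x => (agmSeq (f x) (g x) n).2) := by
  induction n with
  | zero => exact ⟨hf, hg⟩
  | succ n ih => exact ⟨(ih.1.add ih.2).div_const 2, (ih.1.mul ih.2).sqrt⟩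

lemma measurable_lam : Measurable lam := by
  unfold lam
  fun_prop

/-- Lower bound on the AGM appearing in the integral. -/
lemma agm_ge {μ : ℝ} (hμ : 0 < μ) :
    Real.sqrt (Real.sqrt (1 / (4 * μ))) ≤
      agm (Real.sqrt (lam μ)) (Real.sqrt (lam μ + μ)) := by
  have h1 : 0 < lam μ := lam_pos' hμ
  have h2 : 0 < lam μ + μ := by linarith
  have h := (agm_lower _ _ (Real.sqrt_pos.mpr h1) (Real.sqrt_pos.mpr h2)).1
  rwa [← Real.sqrt_mul h1.le, lam_mul hμ] at h

lemma sqrt_le_self {x : ℝ} (hx : 1 ≤ x) : Real.sqrt x ≤ x := by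
  nlinarith [Real.sq_sqrt (by linarith : (0:ℝ) ≤ x), Real.sqrt_nonneg x,
    Real.one_le_sqrt.mpr hx]

theorem stmt18 :
    (∀ μ : ℝ, 0 < μ → 0 < lam μ) ∧
    IntegrableOn
      (fun μ : ℝ => 1 /
        (Real.sqrt (agm (Real.sqrt (lam μ)) (Real.sqrt (lam μ + μ))) *
          Real.sqrt (μ ^ 4 + μ)))
      (Ioi 0) volume := by
  set F : ℝ → ℝ := fun μ => 1 /
    (Real.sqrt (agm (Real.sqrt (lam μ)) (Real.sqrt (lam μ + μ))) *
      Real.sqrt (μ ^ 4 + μ)) with hF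
  -- nonnegativity / positivity facts on Ioi 0
  have hFnonneg : ∀ μ : ℝ, 0 ≤ F μ := by
    intro μ
    apply div_nonneg zero_le_one
    exact mul_nonneg (Real.sqrt_nonneg _) (Real.sqrt_nonneg _)
  -- measurability
  have hmeasA : ∀ n : ℕ, Measurable
      (fun μ : ℝ => (agmSeq (Real.sqrt (lam μ)) (Real.sqrt (lam μ + μ)) n).1) := by
    intro n
    exact (measurable_agmSeq n measurable_lam.sqrt
      ((measurable_lam.add measurable_id).sqrt)).1
  have hagm_meas : AEMeasurable
      (fun μ : ℝ => agm (Real.sqrt (lam μ)) (Real.sqrt (lam μ + μ)))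
      (volume.restrict (Ioi (0:ℝ))) := by
    apply aemeasurable_of_tendsto_metrizable_ae atTop
      (fun n => (hmeasA n).aemeasurable)
    filter_upwards [ae_restrict_mem measurableSet_Ioi] with μ hμ
    have hμ' : 0 < μ := hμ
    have h1 : 0 < lam μ := lam_pos' hμ'
    exact (agm_lower _ _ (Real.sqrt_pos.mpr h1)
      (Real.sqrt_pos.mpr (by linarith : 0 < lam μ + μ))).2
  have hFmeas : AEStronglyMeasurable F (volume.restrict (Ioi (0:ℝ))) := by
    have : AEMeasurable F (volume.restrict (Ioi (0:ℝ))) := by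
      simp only [hF, one_div]
      exact ((Real.continuous_sqrt.measurable.comp_aemeasurable hagm_meas).mul
        ((Measurable.sqrt (by fun_prop)).aemeasurable)).inv
    exact this.aestronglyMeasurable
  -- key pointwise bounds
  have hbound1 : ∀ μ ∈ Ioc (0:ℝ) 1, F μ ≤ 2 * μ ^ (-(1/2) : ℝ) := by
    intro μ hμ
    obtain ⟨hμ0, hμ1⟩ := hμ
    have hge := agm_ge hμ0
    have h14 : (1:ℝ)/4 ≤ 1 / (4 * μ) := by
      apply div_le_div_of_nonneg_left (by norm_num) (by linarith) (by linarith)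
    have hagm2 : (1:ℝ)/2 ≤ agm (Real.sqrt (lam μ)) (Real.sqrt (lam μ + μ)) := by
      refine le_trans ?_ hge
      have : Real.sqrt (1/4) ≤ Real.sqrt (1/(4*μ)) := Real.sqrt_le_sqrt h14
      have h4 : Real.sqrt ((1:ℝ)/4) = 1/2 := by
        rw [show (1:ℝ)/4 = (1/2)^2 by norm_num, Real.sqrt_sq (by norm_num)]
      calc (1:ℝ)/2 ≤ Real.sqrt (1/2) := by
            nlinarith [Real.sq_sqrt (show (0:ℝ) ≤ 1/2 by norm_num),
              Real.sqrt_nonneg ((1:ℝ)/2), Real.sqrt_le_sqrt (show (1:ℝ)/2 ≤ 1 by norm_num),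
              Real.sqrt_one]
        _ = Real.sqrt (Real.sqrt (1/4)) := by rw [h4]
        _ ≤ Real.sqrt (Real.sqrt (1/(4*μ))) := Real.sqrt_le_sqrt this
    have hs2 : (1:ℝ)/2 ≤ Real.sqrt (agm (Real.sqrt (lam μ)) (Real.sqrt (lam μ + μ))) := by
      calc (1:ℝ)/2 ≤ Real.sqrt (1/2) := by
            nlinarith [Real.sq_sqrt (show (0:ℝ) ≤ 1/2 by norm_num),
              Real.sqrt_nonneg ((1:ℝ)/2), Real.sqrt_le_sqrt (show (1:ℝ)/2 ≤ 1 by norm_num),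
              Real.sqrt_one]
        _ ≤ _ := Real.sqrt_le_sqrt hagm2
    have hsqmu : Real.sqrt μ ≤ Real.sqrt (μ ^ 4 + μ) :=
      Real.sqrt_le_sqrt (by nlinarith [pow_pos hμ0 4])
    have hden : (1/2) * Real.sqrt μ ≤
        Real.sqrt (agm (Real.sqrt (lam μ)) (Real.sqrt (lam μ + μ))) *
          Real.sqrt (μ ^ 4 + μ) :=
      mul_le_mul hs2 hsqmu (Real.sqrt_nonneg μ) (le_trans (by norm_num) hs2)
    have hsqmupos : 0 < Real.sqrt μ := Real.sqrt_pos.mpr hμ0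
    have h2 : F μ ≤ 1 / ((1/2) * Real.sqrt μ) :=
      one_div_le_one_div_of_le (by positivity) hden
    calc F μ ≤ 1 / ((1/2) * Real.sqrt μ) := h2
      _ = 2 / Real.sqrt μ := by ring
      _ = 2 * μ ^ (-(1/2) : ℝ) := by
          rw [Real.rpow_neg hμ0.le, ← Real.sqrt_eq_rpow, div_eq_mul_inv]
  have hbound2 : ∀ μ ∈ Ioi (1:ℝ), F μ ≤ 2 * μ ^ (-(3/2) : ℝ) := by
    intro μ hμ
    have hμ1 : (1:ℝ) < μ := hμ
    have hμ0 : (0:ℝ) < μ := by linarith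
    have ht1 : (1:ℝ) ≤ 4 * μ := by linarith
    have hge := agm_ge hμ0
    have hinv : (1:ℝ) / (4 * μ) = (4 * μ)⁻¹ := one_div _
    have hnest : Real.sqrt (Real.sqrt (1 / (4 * μ))) =
        (Real.sqrt (Real.sqrt (4 * μ)))⁻¹ := by
      rw [hinv, Real.sqrt_inv, Real.sqrt_inv]
    have hs1 : (1:ℝ) ≤ Real.sqrt (4 * μ) := by
      have := Real.sqrt_le_sqrt ht1
      rwa [Real.sqrt_one] at this
    have hs2 : (1:ℝ) ≤ Real.sqrt (Real.sqrt (4 * μ)) := by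
      have := Real.sqrt_le_sqrt hs1
      rwa [Real.sqrt_one] at this
    have hs3 : (1:ℝ) ≤ Real.sqrt (Real.sqrt (Real.sqrt (4 * μ))) := by
      have := Real.sqrt_le_sqrt hs2
      rwa [Real.sqrt_one] at this
    -- √agm ≥ (√√√(4μ))⁻¹
    have hagmpos : (0:ℝ) < agm (Real.sqrt (lam μ)) (Real.sqrt (lam μ + μ)) :=
      lt_of_lt_of_le (by rw [hnest]; positivity) hge
    have hsagm : (Real.sqrt (Real.sqrt (Real.sqrt (4 * μ))))⁻¹ ≤
        Real.sqrt (agm (Real.sqrt (lam μ)) (Real.sqrt (lam μ + μ))) := by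
      have := Real.sqrt_le_sqrt hge
      rwa [hnest, Real.sqrt_inv] at this
    have hchain : Real.sqrt (Real.sqrt (Real.sqrt (4 * μ))) ≤ Real.sqrt (4 * μ) :=
      le_trans (sqrt_le_self hs2) (sqrt_le_self hs1)
    have h4mu : Real.sqrt (4 * μ) = 2 * Real.sqrt μ := by
      rw [Real.sqrt_mul (by norm_num), show Real.sqrt 4 = 2 by
        rw [show (4:ℝ) = 2^2 by norm_num, Real.sqrt_sq (by norm_num)]]
    have hsq4 : Real.sqrt (μ ^ 4 + μ) ≥ μ ^ 2 := by
      have : Real.sqrt ((μ^2)^2) ≤ Real.sqrt (μ ^ 4 + μ) :=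
        Real.sqrt_le_sqrt (by nlinarith)
      rwa [Real.sqrt_sq (by positivity)] at this
    have hsqagm_pos : 0 < Real.sqrt (agm (Real.sqrt (lam μ)) (Real.sqrt (lam μ + μ))) :=
      Real.sqrt_pos.mpr hagmpos
    have hμ2pos : (0:ℝ) < μ ^ 2 := by positivity
    have hden : μ ^ 2 / (2 * Real.sqrt μ) ≤
        Real.sqrt (agm (Real.sqrt (lam μ)) (Real.sqrt (lam μ + μ))) *
          Real.sqrt (μ ^ 4 + μ) := by
      have h1 : μ ^ 2 / (2 * Real.sqrt μ) ≤
          (Real.sqrt (Real.sqrt (Real.sqrt (4 * μ))))⁻¹ * (μ ^ 2) := by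
        rw [div_eq_mul_inv, mul_comm]
        apply mul_le_mul_of_nonneg_right _ hμ2pos.le
        rw [← h4mu]
        exact inv_anti₀ (by positivity) hchain
      refine le_trans h1 (mul_le_mul hsagm hsq4 hμ2pos.le hsqagm_pos.le)
    have hdpos : (0:ℝ) < μ ^ 2 / (2 * Real.sqrt μ) := by positivity
    have h2 : F μ ≤ 1 / (μ ^ 2 / (2 * Real.sqrt μ)) :=
      one_div_le_one_div_of_le hdpos hden
    have hrw : μ ^ (-(3/2) : ℝ) = Real.sqrt μ * (μ ^ 2)⁻¹ := by
      rw [show (-(3/2):ℝ) = 1/2 + (-2) by norm_num, Real.rpow_add hμ0,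
        ← Real.sqrt_eq_rpow, Real.rpow_neg hμ0.le,
        show ((2:ℝ)) = ((2:ℕ):ℝ) by norm_num, Real.rpow_natCast]
    calc F μ ≤ 1 / (μ ^ 2 / (2 * Real.sqrt μ)) := h2
      _ = 2 * (Real.sqrt μ * (μ ^ 2)⁻¹) := by
          rw [one_div, inv_div]; ring
      _ = 2 * μ ^ (-(3/2) : ℝ) := by rw [hrw]
  -- integrable comparison functions
  have hg1 : IntegrableOn (fun x : ℝ => 2 * x ^ (-(1/2):ℝ)) (Ioc 0 1) volume := by
    have h := intervalIntegral.intervalIntegrable_rpow' (show (-1:ℝ) < -(1/2) by norm_num) (a := (0:ℝ)) (b := 1)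
    rw [intervalIntegrable_iff_integrableOn_Ioc_of_le (by norm_num : (0:ℝ) ≤ 1)] at h
    exact h.const_mul 2
  have hg2 : IntegrableOn (fun x : ℝ => 2 * x ^ (-(3/2):ℝ)) (Ioi 1) volume := by
    exact (integrableOn_Ioi_rpow_of_lt (by norm_num) one_pos).const_mul 2
  have hI1 : IntegrableOn F (Ioc 0 1) volume := by
    apply Integrable.mono hg1
      (hFmeas.mono_measure (Measure.restrict_mono Ioc_subset_Ioi_self le_rfl))
    filter_upwards [ae_restrict_mem measurableSet_Ioc] with μ hμ
    rw [Real.norm_of_nonneg (hFnonneg μ)]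
    exact (hbound1 μ hμ).trans (le_abs_self _)
  have hI2 : IntegrableOn F (Ioi 1) volume := by
    apply Integrable.mono hg2
      (hFmeas.mono_measure (Measure.restrict_mono (Ioi_subset_Ioi (by norm_num)) le_rfl))
    filter_upwards [ae_restrict_mem measurableSet_Ioi] with μ hμ
    rw [Real.norm_of_nonneg (hFnonneg μ)]
    exact (hbound2 μ hμ).trans (le_abs_self _)
  refine ⟨fun μ hμ => lam_pos' hμ, ?_⟩
  rw [show Ioi (0:ℝ) = Ioc 0 1 ∪ Ioi 1 from (Ioc_union_Ioi_eq_Ioi (by norm_num)).symm]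
  exact hI1.union hI2
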